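/- Let $(X,\mu)$ be a measure space, $K : X \times X \to [0,\infty)$ measurable, $1 < p < \infty$ with conjugate exponent $q$ (i.e. $1/p + 1/q = 1$). Suppose there is a constant $C > 0$ and a measurable positive function $h$ on $X$ such that $\int_X K(x,y) h(y)^q \, d\mu(y) \le C h(x)^q$ for a.e. $x$ and $\int_X K(x,y) h(x)^p \, d\mu(x) \le C h(y)^p$ for a.e. $y$. Then the integral operator $Tf(x) = \int_X K(x,y) f(y) \, d\mu(y)$ is bounded on $L^p(X,\mu)$ with operator norm at most $C$. -/

import Mathlib

open MeasureTheory

open scoped ENNReal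

/-- Key integral estimate for the Schur test, for a measurable `g`. -/
theorem schur_key {X : Type*} [MeasurableSpace X] (μ : Measure X) [SigmaFinite μ]
    (K : X × X → ℝ) (hKmeas : Measurable K) (hKnonneg : ∀ x y, 0 ≤ K (x, y))
    (p q : ℝ) (hp : 1 < p) (hq : 1 < q) (hpq : 1 / p + 1 / q = 1)
    (C : ℝ) (hC : 0 < C) (h : X → ℝ) (hmeas : Measurable h) (hpos : ∀ x, 0 < h x)
    (hSchur1 : ∀ᵐ x ∂μ, ∫⁻ y, ENNReal.ofReal (K (x, y) * h y ^ q) ∂μ ≤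
      ENNReal.ofReal (C * h x ^ q))
    (hSchur2 : ∀ᵐ y ∂μ, ∫⁻ x, ENNReal.ofReal (K (x, y) * h x ^ p) ∂μ ≤
      ENNReal.ofReal (C * h y ^ p))
    (g : X → ℝ) (gmeas : Measurable g) :
    ∫⁻ x, (∫⁻ y, ENNReal.ofReal (K (x, y)) * (‖g y‖₊ : ℝ≥0∞) ∂μ) ^ p ∂μ ≤
      ENNReal.ofReal C ^ p * ∫⁻ y, (‖g y‖₊ : ℝ≥0∞) ^ p ∂μ := by
  have hp0 : (0 : ℝ) < p := zero_lt_one.trans hp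
  have hq0 : (0 : ℝ) < q := zero_lt_one.trans hq
  have hcj : p.HolderConjugate q := Real.holderConjugate_iff.2 ⟨hp, by rw [← one_div, ← one_div]; exact hpq⟩
  set KE : X → X → ℝ≥0∞ := fun x y => ENNReal.ofReal (K (x, y)) with hKE
  set F : X → ℝ≥0∞ := fun y => (‖g y‖₊ : ℝ≥0∞) with hF
  set H : X → ℝ≥0∞ := fun y => ENNReal.ofReal (h y) with hH
  have H0 : ∀ y, H y ≠ 0 := fun y => (ENNReal.ofReal_pos.2 (hpos y)).ne'
  have Htop : ∀ y, H y ≠ ∞ := fun y => ENNReal.ofReal_ne_top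
  have Fmeas : Measurable F := gmeas.nnnorm.coe_nnreal_ennreal
  have KEmeas : Measurable fun z : X × X => ENNReal.ofReal (K z) :=
    hKmeas.ennreal_ofReal
  have Hmeas : Measurable H := hmeas.ennreal_ofReal
  -- rewrite the Schur hypotheses in terms of `KE`, `H`
  have hofq : ∀ x y, ENNReal.ofReal (K (x, y) * h y ^ q) = KE x y * H y ^ q := by
    intro x y
    rw [ENNReal.ofReal_mul (hKnonneg x y), ← ENNReal.ofReal_rpow_of_pos (hpos y)]
  have hofp : ∀ x y, ENNReal.ofReal (K (x, y) * h x ^ p) = KE x y * H x ^ p := by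
    intro x y
    rw [ENNReal.ofReal_mul (hKnonneg x y), ← ENNReal.ofReal_rpow_of_pos (hpos x)]
  -- the auxiliary function A
  set A : X → ℝ≥0∞ := fun x => ∫⁻ y, KE x y * (F y ^ p * (H y)⁻¹ ^ p) ∂μ with hA
  -- pointwise Hölder estimate
  have key : ∀ᵐ x ∂μ, (∫⁻ y, KE x y * F y ∂μ) ≤
      (A x) ^ (1 / p) * (ENNReal.ofReal C * H x ^ q) ^ (1 / q) := by
    filter_upwards [hSchur1] with x hx
    have hx' : ∫⁻ y, KE x y * H y ^ q ∂μ ≤ ENNReal.ofReal C * H x ^ q := by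
      calc ∫⁻ y, KE x y * H y ^ q ∂μ
          = ∫⁻ y, ENNReal.ofReal (K (x, y) * h y ^ q) ∂μ := by
            simp_rw [hofq]
        _ ≤ ENNReal.ofReal (C * h x ^ q) := hx
        _ = ENNReal.ofReal C * H x ^ q := by
            rw [ENNReal.ofReal_mul hC.le, ← ENNReal.ofReal_rpow_of_pos (hpos x)]
    set φ : X → ℝ≥0∞ := fun y => KE x y ^ (1 / q) * H y with hφ
    set ψ : X → ℝ≥0∞ := fun y => KE x y ^ (1 / p) * (F y * (H y)⁻¹) with hψ
    have hprod : ∀ y, ψ y * φ y = KE x y * F y := by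
      intro y
      have : KE x y ^ (1 / p) * KE x y ^ (1 / q) = KE x y := by
        rw [← ENNReal.rpow_add_of_nonneg _ _ (by positivity) (by positivity), hpq,
          ENNReal.rpow_one]
      calc ψ y * φ y = (KE x y ^ (1 / p) * KE x y ^ (1 / q)) * (F y * ((H y)⁻¹ * H y)) := by
            ring
        _ = KE x y * (F y * 1) := by
            rw [this, ENNReal.inv_mul_cancel (H0 y) (Htop y)]
        _ = KE x y * F y := by rw [mul_one]
    have hψmeas : AEMeasurable ψ μ := by
      exact ((KEmeas.comp (measurable_prodMk_left)).pow_const _ |>.mul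
        (Fmeas.mul Hmeas.inv)).aemeasurable
    have hφmeas : AEMeasurable φ μ := by
      exact ((KEmeas.comp (measurable_prodMk_left)).pow_const _ |>.mul Hmeas).aemeasurable
    have holder := ENNReal.lintegral_mul_le_Lp_mul_Lq μ hcj hψmeas hφmeas
    have hψp : ∫⁻ y, ψ y ^ p ∂μ = A x := by
      refine lintegral_congr fun y => ?_
      rw [hψ]
      rw [ENNReal.mul_rpow_of_nonneg _ _ hp0.le, ENNReal.mul_rpow_of_nonneg _ _ hp0.le,
        ← ENNReal.rpow_mul, one_div_mul_cancel hp0.ne', ENNReal.rpow_one]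
    have hφq : ∫⁻ y, φ y ^ q ∂μ ≤ ENNReal.ofReal C * H x ^ q := by
      refine le_trans (le_of_eq ?_) hx'
      refine lintegral_congr fun y => ?_
      rw [hφ, ENNReal.mul_rpow_of_nonneg _ _ hq0.le, ← ENNReal.rpow_mul,
        one_div_mul_cancel hq0.ne', ENNReal.rpow_one]
    calc ∫⁻ y, KE x y * F y ∂μ = ∫⁻ y, (ψ * φ) y ∂μ := by
          refine lintegral_congr fun y => ?_
          simp only [Pi.mul_apply, hprod y]
      _ ≤ (∫⁻ y, ψ y ^ p ∂μ) ^ (1 / p) * (∫⁻ y, φ y ^ q ∂μ) ^ (1 / q) := holder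
      _ ≤ (A x) ^ (1 / p) * (ENNReal.ofReal C * H x ^ q) ^ (1 / q) := by
          rw [hψp]
          gcongr
  -- raise to the power p
  have key2 : ∀ᵐ x ∂μ, (∫⁻ y, KE x y * F y ∂μ) ^ p ≤
      ENNReal.ofReal C ^ (p / q) * (H x ^ p * A x) := by
    filter_upwards [key] with x hx
    calc (∫⁻ y, KE x y * F y ∂μ) ^ p
        ≤ ((A x) ^ (1 / p) * (ENNReal.ofReal C * H x ^ q) ^ (1 / q)) ^ p := by
          exact ENNReal.rpow_le_rpow hx hp0.le
      _ = A x * (ENNReal.ofReal C * H x ^ q) ^ (p / q) := by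
          rw [ENNReal.mul_rpow_of_nonneg _ _ hp0.le, ← ENNReal.rpow_mul,
            one_div_mul_cancel hp0.ne', ENNReal.rpow_one, ← ENNReal.rpow_mul]
          congr 2
          ring
      _ = A x * (ENNReal.ofReal C ^ (p / q) * H x ^ p) := by
          rw [ENNReal.mul_rpow_of_nonneg _ _ (by positivity), ← ENNReal.rpow_mul]
          congr 2
          field_simp
      _ = ENNReal.ofReal C ^ (p / q) * (H x ^ p * A x) := by ring
  have step1 : ∫⁻ x, (∫⁻ y, KE x y * F y ∂μ) ^ p ∂μ ≤
      ENNReal.ofReal C ^ (p / q) * ∫⁻ x, H x ^ p * A x ∂μ := by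
    calc ∫⁻ x, (∫⁻ y, KE x y * F y ∂μ) ^ p ∂μ
        ≤ ∫⁻ x, ENNReal.ofReal C ^ (p / q) * (H x ^ p * A x) ∂μ := lintegral_mono_ae key2
      _ = ENNReal.ofReal C ^ (p / q) * ∫⁻ x, H x ^ p * A x ∂μ := lintegral_const_mul' _ _ (by
          exact ENNReal.rpow_ne_top_of_nonneg (by positivity) ENNReal.ofReal_ne_top)
  -- Tonelli
  have prodmeas : Measurable fun z : X × X =>
      H z.1 ^ p * (KE z.1 z.2 * (F z.2 ^ p * (H z.2)⁻¹ ^ p)) := by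
    exact ((Hmeas.comp measurable_fst).pow_const _).mul
      (KEmeas.mul (((Fmeas.comp measurable_snd).pow_const _).mul
        ((Hmeas.comp measurable_snd).inv.pow_const _)))
  have tonelli : ∫⁻ x, H x ^ p * A x ∂μ =
      ∫⁻ y, (F y ^ p * (H y)⁻¹ ^ p) * ∫⁻ x, KE x y * H x ^ p ∂μ ∂μ := by
    calc ∫⁻ x, H x ^ p * A x ∂μ
        = ∫⁻ x, ∫⁻ y, H x ^ p * (KE x y * (F y ^ p * (H y)⁻¹ ^ p)) ∂μ ∂μ := by
          refine lintegral_congr fun x => ?_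
          rw [hA, ← lintegral_const_mul' _ _ (ENNReal.rpow_ne_top_of_nonneg hp0.le (Htop x))]
      _ = ∫⁻ y, ∫⁻ x, H x ^ p * (KE x y * (F y ^ p * (H y)⁻¹ ^ p)) ∂μ ∂μ :=
          lintegral_lintegral_swap prodmeas.aemeasurable
      _ = ∫⁻ y, (F y ^ p * (H y)⁻¹ ^ p) * ∫⁻ x, KE x y * H x ^ p ∂μ ∂μ := by
          refine lintegral_congr fun y => ?_
          rw [← lintegral_const_mul' _ _ (by
            exact ENNReal.mul_ne_top
              (ENNReal.rpow_ne_top_of_nonneg hp0.le (by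
                simp only [hF]; exact ENNReal.coe_ne_top))
              (ENNReal.rpow_ne_top_of_nonneg hp0.le (ENNReal.inv_ne_top.2 (H0 y))))]
          refine lintegral_congr fun x => ?_
          ring
  have step2 : ∫⁻ y, (F y ^ p * (H y)⁻¹ ^ p) * ∫⁻ x, KE x y * H x ^ p ∂μ ∂μ ≤
      ENNReal.ofReal C * ∫⁻ y, F y ^ p ∂μ := by
    rw [← lintegral_const_mul' _ _ ENNReal.ofReal_ne_top]
    refine lintegral_mono_ae ?_
    filter_upwards [hSchur2] with y hy
    have hy' : ∫⁻ x, KE x y * H x ^ p ∂μ ≤ ENNReal.ofReal C * H y ^ p := by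
      calc ∫⁻ x, KE x y * H x ^ p ∂μ
          = ∫⁻ x, ENNReal.ofReal (K (x, y) * h x ^ p) ∂μ := by simp_rw [hofp]
        _ ≤ ENNReal.ofReal (C * h y ^ p) := hy
        _ = ENNReal.ofReal C * H y ^ p := by
            rw [ENNReal.ofReal_mul hC.le, ← ENNReal.ofReal_rpow_of_pos (hpos y)]
    calc (F y ^ p * (H y)⁻¹ ^ p) * ∫⁻ x, KE x y * H x ^ p ∂μ
        ≤ (F y ^ p * (H y)⁻¹ ^ p) * (ENNReal.ofReal C * H y ^ p) := by gcongr
      _ = ENNReal.ofReal C * (F y ^ p * ((H y)⁻¹ ^ p * H y ^ p)) := by ring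
      _ = ENNReal.ofReal C * F y ^ p := by
          rw [← ENNReal.mul_rpow_of_nonneg _ _ hp0.le,
            ENNReal.inv_mul_cancel (H0 y) (Htop y), ENNReal.one_rpow, mul_one]
  calc ∫⁻ x, (∫⁻ y, KE x y * F y ∂μ) ^ p ∂μ
      ≤ ENNReal.ofReal C ^ (p / q) * ∫⁻ x, H x ^ p * A x ∂μ := step1
    _ ≤ ENNReal.ofReal C ^ (p / q) * (ENNReal.ofReal C * ∫⁻ y, F y ^ p ∂μ) := by
        rw [tonelli]; gcongr
    _ = ENNReal.ofReal C ^ p * ∫⁻ y, F y ^ p ∂μ := by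
        rw [← mul_assoc]
        congr 1
        have hcne : ENNReal.ofReal C ≠ 0 := (ENNReal.ofReal_pos.2 hC).ne'
        nth_rewrite 2 [← ENNReal.rpow_one (ENNReal.ofReal C)]
        rw [← ENNReal.rpow_add _ _ hcne ENNReal.ofReal_ne_top]
        congr 1
        have hpq' : q + p = p * q := by field_simp at hpq; linarith
        field_simp
        linarith

/-- Schur test: if the nonnegative kernel `K` satisfies the two weighted estimates
with weight `h` and constant `C`, then the integral operator `f ↦ ∫ K (x, y) f y dy`
is bounded on `L^p` with norm at most `C`. -/
theorem stmt_0 {X : Type*} [MeasurableSpace X] (μ : Measure X) [SigmaFinite μ]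
    (K : X × X → ℝ) (hKmeas : Measurable K) (hKnonneg : ∀ x y, 0 ≤ K (x, y))
    (p q : ℝ) (hp : 1 < p) (hq : 1 < q) (hpq : 1 / p + 1 / q = 1)
    (C : ℝ) (hC : 0 < C) (h : X → ℝ) (hmeas : Measurable h) (hpos : ∀ x, 0 < h x)
    (hSchur1 : ∀ᵐ x ∂μ, ∫⁻ y, ENNReal.ofReal (K (x, y) * h y ^ q) ∂μ ≤
      ENNReal.ofReal (C * h x ^ q))
    (hSchur2 : ∀ᵐ y ∂μ, ∫⁻ x, ENNReal.ofReal (K (x, y) * h x ^ p) ∂μ ≤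
      ENNReal.ofReal (C * h y ^ p)) :
    ∀ f : X → ℝ, MemLp f (ENNReal.ofReal p) μ →
      MemLp (fun x => ∫ y, K (x, y) * f y ∂μ) (ENNReal.ofReal p) μ ∧
      eLpNorm (fun x => ∫ y, K (x, y) * f y ∂μ) (ENNReal.ofReal p) μ ≤
        ENNReal.ofReal C * eLpNorm f (ENNReal.ofReal p) μ := by
  intro f hf
  have hp0 : (0 : ℝ) < p := zero_lt_one.trans hp
  set P : ℝ≥0∞ := ENNReal.ofReal p with hP
  have hP0 : P ≠ 0 := (ENNReal.ofReal_pos.2 hp0).ne'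
  have hPtop : P ≠ ∞ := ENNReal.ofReal_ne_top
  have hPto : P.toReal = p := ENNReal.toReal_ofReal hp0.le
  -- measurable representative of f
  set g : X → ℝ := hf.1.mk f with hg
  have gsm : StronglyMeasurable g := hf.1.stronglyMeasurable_mk
  have gmeas : Measurable g := gsm.measurable
  have hfg : f =ᵐ[μ] g := hf.1.ae_eq_mk
  have hTfg : ∀ x, (∫ y, K (x, y) * f y ∂μ) = ∫ y, K (x, y) * g y ∂μ := by
    intro x
    refine integral_congr_ae ?_
    filter_upwards [hfg] with y hy
    rw [hy]
  have hgLp : MemLp g P μ := hf.ae_eq hfg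
  have hsnf : eLpNorm f P μ = eLpNorm g P μ := eLpNorm_congr_ae hfg
  -- the key estimate
  have key := schur_key μ K hKmeas hKnonneg p q hp hq hpq C hC h hmeas hpos
    hSchur1 hSchur2 g gmeas
  -- strong measurability of the operator
  have Tsm : StronglyMeasurable fun x => ∫ y, K (x, y) * g y ∂μ := by
    have : StronglyMeasurable fun z : X × X => K z * g z.2 :=
      (hKmeas.mul (gmeas.comp measurable_snd)).stronglyMeasurable
    exact this.integral_prod_right'
  -- pointwise norm bound
  have hptwise : ∀ x, (‖∫ y, K (x, y) * g y ∂μ‖₊ : ℝ≥0∞) ≤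
      ∫⁻ y, ENNReal.ofReal (K (x, y)) * (‖g y‖₊ : ℝ≥0∞) ∂μ := by
    intro x
    refine le_trans (enorm_integral_le_lintegral_enorm _) (le_of_eq ?_)
    refine lintegral_congr fun y => ?_
    rw [enorm_mul, Real.enorm_eq_ofReal (hKnonneg x y), ← enorm_eq_nnnorm]
  -- eLpNorm estimate
  have hsn : eLpNorm (fun x => ∫ y, K (x, y) * g y ∂μ) P μ ≤
      ENNReal.ofReal C * eLpNorm g P μ := by
    rw [eLpNorm_eq_lintegral_rpow_enorm_toReal hP0 hPtop,
      eLpNorm_eq_lintegral_rpow_enorm_toReal hP0 hPtop, hPto]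
    calc (∫⁻ x, (‖∫ y, K (x, y) * g y ∂μ‖₊ : ℝ≥0∞) ^ p ∂μ) ^ (1 / p)
        ≤ (∫⁻ x, (∫⁻ y, ENNReal.ofReal (K (x, y)) * (‖g y‖₊ : ℝ≥0∞) ∂μ) ^ p ∂μ) ^ (1 / p) := by
          gcongr with x
          exact hptwise x
      _ ≤ (ENNReal.ofReal C ^ p * ∫⁻ y, (‖g y‖₊ : ℝ≥0∞) ^ p ∂μ) ^ (1 / p) := by
          gcongr
      _ = ENNReal.ofReal C * (∫⁻ y, (‖g y‖₊ : ℝ≥0∞) ^ p ∂μ) ^ (1 / p) := by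
          rw [ENNReal.mul_rpow_of_nonneg _ _ (by positivity), ← ENNReal.rpow_mul,
            mul_one_div_cancel hp0.ne', ENNReal.rpow_one]
  have hsn' : eLpNorm (fun x => ∫ y, K (x, y) * f y ∂μ) P μ ≤
      ENNReal.ofReal C * eLpNorm f P μ := by
    rw [hsnf]
    calc eLpNorm (fun x => ∫ y, K (x, y) * f y ∂μ) P μ
        = eLpNorm (fun x => ∫ y, K (x, y) * g y ∂μ) P μ := by
          refine eLpNorm_congr_ae (Filter.Eventually.of_forall fun x => hTfg x)
      _ ≤ ENNReal.ofReal C * eLpNorm g P μ := hsn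
  refine ⟨⟨?_, ?_⟩, hsn'⟩
  · refine (Tsm.aestronglyMeasurable).congr ?_
    exact Filter.Eventually.of_forall fun x => (hTfg x).symm
  · refine lt_of_le_of_lt hsn' ?_
    exact ENNReal.mul_lt_top ENNReal.ofReal_lt_top hf.eLpNorm_lt_top
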